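/- Let 1 < α < β and let x_1, …, x_n be an (α, k)-sequence in a metric space. Then there exists a subsequence of length at least ⌊n / (2k·log_α β)⌋ that is a (β, k)-sequence. -/

import Mathlib

open scoped Classical

/-- `diamPart ℓ S` is the best-`ℓ`-diameter of `S`: the least `D ≥ 0` such that
`S` can be partitioned into `ℓ` parts each of diameter at most `D`. -/
noncomputable def diamPart {α : Type*} [MetricSpace α] (ℓ : ℕ) (S : Finset α) : ℝ :=
  sInf {D : ℝ | 0 ≤ D ∧ ∃ f : α → Fin ℓ, ∀ x ∈ S, ∀ y ∈ S, f x = f y → dist x y ≤ D}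

/-- `x 0, …, x (n-1)` is an `(a, k)`-sequence. -/
def IsAKSeq {α : Type*} [MetricSpace α] (a : ℝ) (k n : ℕ) (x : ℕ → α) : Prop :=
  ∀ j, 0 < j → j < n → ∀ i < j,
    a * diamPart (k - 1) ((Finset.range j).image x) < dist (x i) (x j)

namespace AKAux

variable {X : Type*} [MetricSpace X]

def VSet (ℓ : ℕ) (S : Finset X) : Set ℝ :=
  {D : ℝ | 0 ≤ D ∧ ∃ f : X → Fin ℓ, ∀ x ∈ S, ∀ y ∈ S, f x = f y → dist x y ≤ D}

lemma diamPart_eq (ℓ : ℕ) (S : Finset X) : diamPart ℓ S = sInf (VSet ℓ S) := rfl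

lemma VSet_nonempty {ℓ : ℕ} (hℓ : 0 < ℓ) (S : Finset X) : (VSet ℓ S).Nonempty := by
  refine ⟨Metric.diam (S : Set X), Metric.diam_nonneg, fun _ => ⟨0, hℓ⟩, ?_⟩
  intro p hp q hq _
  exact Metric.dist_le_diam_of_mem S.finite_toSet.isBounded hp hq

lemma VSet_bddBelow (ℓ : ℕ) (S : Finset X) : BddBelow (VSet ℓ S) :=
  ⟨0, fun _ hD => hD.1⟩

lemma diamPart_nonneg (ℓ : ℕ) (S : Finset X) : 0 ≤ diamPart ℓ S :=
  Real.sInf_nonneg (fun _ hD => hD.1)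

lemma diamPart_mono {ℓ : ℕ} (hℓ : 0 < ℓ) {S T : Finset X} (h : S ⊆ T) :
    diamPart ℓ S ≤ diamPart ℓ T := by
  refine csInf_le_csInf (VSet_bddBelow ℓ S) (VSet_nonempty hℓ T) ?_
  rintro D ⟨hD0, f, hf⟩
  exact ⟨hD0, f, fun p hp q hq hpq => hf p (h hp) q (h hq) hpq⟩

lemma le_diamPart {k : ℕ} (hk : 2 ≤ k) {S : Finset X} {c : ℝ} (hc : 0 ≤ c)
    (y : Fin k → X) (hy : ∀ i, y i ∈ S)
    (hd : ∀ i j, i ≠ j → c < dist (y i) (y j)) : c ≤ diamPart (k - 1) S := by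
  refine le_csInf (VSet_nonempty (by omega) S) ?_
  rintro D ⟨hD0, f, hf⟩
  have hcard : Fintype.card (Fin (k - 1)) < Fintype.card (Fin k) := by
    simpa using by omega
  obtain ⟨i, j, hij, hfe⟩ := Fintype.exists_ne_map_eq_of_card_lt (fun i => f (y i)) hcard
  exact le_of_lt (lt_of_lt_of_le (hd i j hij) (hf _ (hy i) _ (hy j) hfe))

lemma D_mono {k : ℕ} (hk : 2 ≤ k) (x : ℕ → X) {s t : ℕ} (h : s ≤ t) :
    diamPart (k - 1) ((Finset.range s).image x) ≤ diamPart (k - 1) ((Finset.range t).image x) :=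
  diamPart_mono (by omega) (Finset.image_subset_image (Finset.range_subset_range.mpr h))

lemma step {a : ℝ} (ha : 1 < a) {k n : ℕ} (hk : 2 ≤ k) {x : ℕ → X} (hx : IsAKSeq a k n x)
    {p : ℕ} (hpn : p + k ≤ n) :
    a * diamPart (k - 1) ((Finset.range p).image x)
      ≤ diamPart (k - 1) ((Finset.range (p + k)).image x) := by
  have ha0 : (0:ℝ) < a := lt_trans one_pos ha
  have hc : (0:ℝ) ≤ a * diamPart (k - 1) ((Finset.range p).image x) :=
    mul_nonneg ha0.le (diamPart_nonneg _ _)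
  refine le_diamPart hk hc (fun i : Fin k => x (p + i)) ?_ ?_
  · intro i
    exact Finset.mem_image_of_mem x (Finset.mem_range.mpr (by omega))
  · have key : ∀ i j : Fin k, (i : ℕ) < (j : ℕ) →
        a * diamPart (k - 1) ((Finset.range p).image x) < dist (x (p + i)) (x (p + j)) := by
      intro i j hij
      have h1 := hx (p + j) (by omega) (by omega) (p + i) (by omega)
      refine lt_of_le_of_lt ?_ h1
      exact mul_le_mul_of_nonneg_left (D_mono hk x (by omega)) ha0.le
    intro i j hij
    rcases lt_or_gt_of_ne (fun h : (i:ℕ) = (j:ℕ) => hij (Fin.ext h)) with h | h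
    · exact key i j h
    · rw [dist_comm]; exact key j i h

lemma iter {a : ℝ} (ha : 1 < a) {k n : ℕ} (hk : 2 ≤ k) {x : ℕ → X} (hx : IsAKSeq a k n x)
    (p t : ℕ) (hpn : p + k * t ≤ n) :
    a ^ t * diamPart (k - 1) ((Finset.range p).image x)
      ≤ diamPart (k - 1) ((Finset.range (p + k * t)).image x) := by
  induction t with
  | zero => simp
  | succ t ih =>
    have ha0 : (0:ℝ) < a := lt_trans one_pos ha
    have hs : p + k * (t + 1) = p + k * t + k := by ring
    rw [hs] at hpn
    have h1 : a ^ (t+1) * diamPart (k - 1) ((Finset.range p).image x)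
        ≤ a * diamPart (k - 1) ((Finset.range (p + k * t)).image x) := by
      rw [pow_succ, mul_comm (a ^ t) a, mul_assoc]
      exact mul_le_mul_of_nonneg_left (ih (by omega)) ha0.le
    have h2 := step ha hk hx (p := p + k * t) (by omega)
    rw [hs]
    exact h1.trans h2

end AKAux

/-- Any `(a,k)`-sequence of length `n` contains a `(b,k)`-subsequence of length
at least `⌊n / (2k·log_a b)⌋`, for `1 < a < b`. -/
theorem ak_seq_subsequence {α : Type*} [MetricSpace α] (a b : ℝ) (ha : 1 < a) (hab : a < b)
    (k n : ℕ) (hk : 2 ≤ k) (x : ℕ → α) (hx : IsAKSeq a k n x) :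
    ∃ (L : ℕ) (g : ℕ → ℕ), StrictMono g ∧ (∀ i < L, g i < n) ∧
      Nat.floor ((n : ℝ) / (2 * k * Real.logb a b)) ≤ L ∧
      IsAKSeq b k L (x ∘ g) := by
  have ha0 : (0:ℝ) < a := lt_trans one_pos ha
  have hb0 : (0:ℝ) < b := lt_trans ha0 hab
  set lg := Real.logb a b with hlg
  have hlg1 : 1 < lg := by
    rw [hlg, Real.lt_logb_iff_rpow_lt ha hb0, Real.rpow_one]; exact hab
  set t := Nat.ceil lg with hT
  have ht1 : 1 ≤ t := Nat.one_le_ceil_iff.mpr (by linarith)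
  set m := k * t with hm
  have hm0 : 0 < m := by positivity
  set L := n / m with hL
  refine ⟨L, fun i => i * m, ?_, ?_, ?_, ?_⟩
  · intro i j hij
    exact mul_lt_mul_of_pos_right hij hm0
  · intro i hiL
    have h1 : (i + 1) * m ≤ (n / m) * m := Nat.mul_le_mul_right m (by omega)
    have h2 : (n / m) * m ≤ n := Nat.div_mul_le_self n m
    have : 0 < m := hm0
    nlinarith
  · -- floor bound
    have hmr : (m : ℝ) ≤ 2 * k * lg := by
      have h1 : (t : ℝ) < lg + 1 := Nat.ceil_lt_add_one (by linarith)
      have h2 : lg + 1 ≤ 2 * lg := by linarith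
      have hk0 : (0:ℝ) ≤ (k : ℝ) := Nat.cast_nonneg k
      push_cast [hm]
      nlinarith
    have hdiv : (n : ℝ) / (2 * k * lg) ≤ (n : ℝ) / m := by
      apply div_le_div_of_nonneg_left (Nat.cast_nonneg n) _ hmr
      exact_mod_cast hm0
    calc Nat.floor ((n : ℝ) / (2 * k * lg)) ≤ Nat.floor ((n : ℝ) / (m : ℝ)) :=
          Nat.floor_le_floor hdiv
      _ = n / m := by rw [Nat.floor_div_natCast, Nat.floor_natCast]
      _ = L := rfl
  · -- IsAKSeq b k L
    intro j hj0 hjL i hij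
    have hgjn : j * m < n := by
      have h1 : (j + 1) * m ≤ (n / m) * m := Nat.mul_le_mul_right m (by omega)
      have h2 : (n / m) * m ≤ n := Nat.div_mul_le_self n m
      nlinarith
    set p := (j - 1) * m + 1 with hp
    have hsub : (Finset.range j).image (x ∘ (fun i => i * m))
        ⊆ (Finset.range p).image x := by
      intro y hy
      simp only [Finset.mem_image, Finset.mem_range, Function.comp_apply] at hy ⊢
      obtain ⟨i', hi', rfl⟩ := hy
      refine ⟨i' * m, ?_, rfl⟩
      have : i' * m ≤ (j - 1) * m := Nat.mul_le_mul_right m (by omega)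
      omega
    have hDsub : diamPart (k - 1) ((Finset.range j).image (x ∘ (fun i => i * m)))
        ≤ diamPart (k - 1) ((Finset.range p).image x) :=
      AKAux.diamPart_mono (by omega) hsub
    -- growth: D_{p + k*(t-1)} ≥ a^(t-1) * D_p and p + k*(t-1) ≤ j*m
    have hple : p + k * (t - 1) ≤ j * m := by
      have h1 : (j - 1) * m + m = j * m := by
        have hj : j - 1 + 1 = j := by omega
        calc (j-1) * m + m = ((j-1)+1) * m := by ring
          _ = j * m := by rw [hj]
      have h3 : k * (t - 1) + k = m := by
        rw [hm]
        have htt : t - 1 + 1 = t := by omega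
        calc k * (t-1) + k = k * ((t-1)+1) := by ring
          _ = k * t := by rw [htt]
      omega
    have hiter := AKAux.iter ha hk hx p (t - 1) (by omega)
    have hmono := AKAux.D_mono hk x hple
    have hmain := hx (j * m) (by positivity) hgjn (i * m)
      (mul_lt_mul_of_pos_right hij hm0)
    -- b ≤ a ^ t
    have hbat : b ≤ a ^ t := by
      have h1 : b = a ^ (lg : ℝ) := (Real.rpow_logb ha0 (ne_of_gt ha) hb0).symm
      rw [h1, ← Real.rpow_natCast a t]
      exact Real.rpow_le_rpow_of_exponent_le ha.le (Nat.le_ceil lg)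
    have hat : a ^ t = a * a ^ (t - 1) := by
      rw [← pow_succ']
      congr 1
      omega
    have hDp0 : 0 ≤ diamPart (k - 1) ((Finset.range p).image x) :=
      AKAux.diamPart_nonneg _ _
    calc b * diamPart (k - 1) ((Finset.range j).image (x ∘ (fun i => i * m)))
        ≤ b * diamPart (k - 1) ((Finset.range p).image x) :=
          mul_le_mul_of_nonneg_left hDsub hb0.le
      _ ≤ a ^ t * diamPart (k - 1) ((Finset.range p).image x) :=
          mul_le_mul_of_nonneg_right hbat hDp0
      _ = a * (a ^ (t - 1) * diamPart (k - 1) ((Finset.range p).image x)) := by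
          rw [hat]; ring
      _ ≤ a * diamPart (k - 1) ((Finset.range (p + k * (t - 1))).image x) :=
          mul_le_mul_of_nonneg_left hiter ha0.le
      _ ≤ a * diamPart (k - 1) ((Finset.range (j * m)).image x) :=
          mul_le_mul_of_nonneg_left hmono ha0.le
      _ < dist (x (i * m)) (x (j * m)) := hmain
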